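/- Consider the ODE g'(s) = −λ₁ g(s) / √(s² λ_η² − λ₁² g²(s)) with initial condition g(1) = λ_η/λ₁, where λ₁, λ_η > 0. Then this problem has a solution g defined on [1, ∞), g is positive and decreasing, and g(s) < s λ_η/λ₁ for s > 1 (so that the square root is well-defined and positive for s > 1). -/

import Mathlib

open Set Real

open Set Real intervalIntegral MeasureTheory

noncomputable def kkf (c : ℝ) : ℝ → ℝ := fun t => c / (c * t + Real.sqrt (t^2 - c^2))
noncomputable def FFf (c : ℝ) : ℝ → ℝ := fun v => ∫ t in c..v, kkf c t
noncomputable def SSf (c : ℝ) : ℝ → ℝ := fun v => v * Real.exp (-(FFf c v)) / c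

variable {c : ℝ}

lemma denom_pos (hc : 0 < c) {t : ℝ} (ht : 0 < t) :
    0 < c * t + Real.sqrt (t^2 - c^2) :=
  add_pos_of_pos_of_nonneg (mul_pos hc ht) (Real.sqrt_nonneg _)

lemma kk_pos (hc : 0 < c) {t : ℝ} (ht : 0 < t) : 0 < kkf c t :=
  div_pos hc (denom_pos hc ht)

lemma kk_contOn (hc : 0 < c) : ContinuousOn (kkf c) (Ioi 0) := by
  apply ContinuousOn.div continuousOn_const
  · exact ((continuous_const.mul continuous_id).add
      ((continuous_pow 2).sub continuous_const).sqrt).continuousOn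
  · exact fun t ht => (denom_pos hc ht).ne'

lemma kk_intble (hc : 0 < c) {a b : ℝ} (ha : 0 < a) (hb : 0 < b) :
    IntervalIntegrable (kkf c) volume a b := by
  apply ContinuousOn.intervalIntegrable
  apply (kk_contOn hc).mono
  intro x hx
  rcases le_total a b with h | h
  · rw [uIcc_of_le h] at hx; exact lt_of_lt_of_le ha hx.1
  · rw [uIcc_of_ge h] at hx; exact lt_of_lt_of_le hb hx.1

lemma FF_hasDerivAt (hc : 0 < c) {v : ℝ} (hv : 0 < v) :
    HasDerivAt (FFf c) (kkf c v) v := by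
  apply intervalIntegral.integral_hasDerivAt_right (kk_intble hc hc hv)
  · exact ((kk_contOn hc).stronglyMeasurableAtFilter isOpen_Ioi v hv)
  · exact (kk_contOn hc).continuousAt (Ioi_mem_nhds hv)

lemma FF_self : FFf c c = 0 := by simp [FFf]

lemma SS_self (hc : 0 < c) : SSf c c = 1 := by
  simp [SSf, FF_self, hc.ne']

lemma SS_hasDerivAt (hc : 0 < c) {v : ℝ} (hv : 0 < v) :
    HasDerivAt (SSf c) (Real.exp (-(FFf c v)) * (1 - v * kkf c v) / c) v := by
  have h1 : HasDerivAt (fun v => v * Real.exp (-(FFf c v)))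
      (1 * Real.exp (-(FFf c v)) + v * (Real.exp (-(FFf c v)) * -(kkf c v))) v :=
    (hasDerivAt_id v).mul ((FF_hasDerivAt hc hv).neg.exp)
  have := h1.div_const c
  exact this.congr_deriv (by ring)

lemma one_sub_mul_kk (hc : 0 < c) {v : ℝ} (hv : 0 < v) :
    1 - v * kkf c v = Real.sqrt (v^2 - c^2) / (c * v + Real.sqrt (v^2 - c^2)) := by
  have hd := (denom_pos hc hv).ne'
  simp only [kkf]
  rw [eq_div_iff hd, sub_mul, mul_assoc, div_mul_cancel₀ _ hd]
  ring

lemma one_sub_mul_kk_pos (hc : 0 < c) {v : ℝ} (hv : c < v) :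
    0 < 1 - v * kkf c v := by
  rw [one_sub_mul_kk hc (hc.trans hv)]
  apply div_pos _ (denom_pos hc (hc.trans hv))
  apply Real.sqrt_pos.2
  nlinarith

lemma SS_contOn (hc : 0 < c) : ContinuousOn (SSf c) (Ici c) := fun v hv =>
  ((SS_hasDerivAt hc (lt_of_lt_of_le hc hv)).continuousAt).continuousWithinAt

lemma SS_strictMono (hc : 0 < c) : StrictMonoOn (SSf c) (Ici c) := by
  apply strictMonoOn_of_deriv_pos (convex_Ici c) (SS_contOn hc)
  intro v hv
  rw [interior_Ici] at hv
  rw [(SS_hasDerivAt hc (hc.trans hv)).deriv]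
  exact div_pos (mul_pos (Real.exp_pos _) (one_sub_mul_kk_pos hc hv)) hc

lemma kk_le (hc : 0 < c) {t : ℝ} (ht : 2 * c ≤ t) :
    kkf c t ≤ (2 * c) / ((2 * c + 1) * t) := by
  have ht0 : 0 < t := lt_of_lt_of_le (by linarith) ht
  have hs : t / 2 ≤ Real.sqrt (t^2 - c^2) := by
    rw [show t / 2 = Real.sqrt ((t/2)^2) by rw [Real.sqrt_sq (by linarith)]]
    apply Real.sqrt_le_sqrt
    nlinarith
  rw [kkf, div_le_div_iff₀ (denom_pos hc ht0) (by positivity)]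
  nlinarith [Real.sqrt_nonneg (t^2 - c^2)]

lemma FF_le (hc : 0 < c) {v : ℝ} (hv : 2 * c ≤ v) :
    FFf c v ≤ FFf c (2 * c) + (2 * c / (2 * c + 1)) * (Real.log v - Real.log (2 * c)) := by
  have h2c : (0:ℝ) < 2 * c := by linarith
  have hv0 : 0 < v := lt_of_lt_of_le h2c hv
  have hsplit : FFf c (2*c) + ∫ t in (2*c)..v, kkf c t = FFf c v :=
    intervalIntegral.integral_add_adjacent_intervals (kk_intble hc hc h2c)
      (kk_intble hc h2c hv0)
  have hcont2 : ContinuousOn (fun t : ℝ => (2*c) / ((2*c+1) * t)) (Icc (2*c) v) := by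
    apply ContinuousOn.div continuousOn_const (continuousOn_const.mul continuousOn_id)
    intro x hx
    have : 0 < x := lt_of_lt_of_le h2c hx.1
    exact mul_ne_zero (by linarith : (0:ℝ) < 2*c+1).ne' this.ne'
  have hint2 : IntervalIntegrable (fun t : ℝ => (2*c) / ((2*c+1) * t)) volume (2*c) v := by
    rw [intervalIntegrable_iff_integrableOn_Icc_of_le hv]
    exact hcont2.integrableOn_compact isCompact_Icc
  have hmono : (∫ t in (2*c)..v, kkf c t) ≤ ∫ t in (2*c)..v, (2*c) / ((2*c+1) * t) := by
    apply intervalIntegral.integral_mono_on hv (kk_intble hc h2c hv0) hint2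
    intro t ht
    exact kk_le hc ht.1
  have hval : (∫ t in (2*c)..v, (2*c) / ((2*c+1) * t))
      = (2 * c / (2 * c + 1)) * (Real.log v - Real.log (2 * c)) := by
    have : ∀ t : ℝ, (2*c) / ((2*c+1) * t) = (2*c/(2*c+1)) * (1 / t) := by
      intro t
      rw [mul_one_div, div_div]
    simp_rw [this]
    rw [intervalIntegral.integral_const_mul, integral_one_div, Real.log_div hv0.ne' h2c.ne']
    intro h
    rcases (mem_uIcc.1 h) with ⟨h1, _⟩ | ⟨h1, _⟩ <;> linarith
  linarith [hsplit, hmono, hval.le, hval.ge]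

lemma SS_tendsto (hc : 0 < c) : Filter.Tendsto (SSf c) Filter.atTop Filter.atTop := by
  set B : ℝ := FFf c (2*c) - (2 * c / (2 * c + 1)) * Real.log (2 * c) + Real.log c with hB
  have h1 : Filter.Tendsto (fun v : ℝ => Real.exp ((1/(2*c+1)) * Real.log v - B))
      Filter.atTop Filter.atTop := by
    apply Real.tendsto_exp_atTop.comp
    apply Filter.tendsto_atTop_add_const_right
    exact Real.tendsto_log_atTop.const_mul_atTop (by positivity)
  apply Filter.tendsto_atTop_mono' _ _ h1
  filter_upwards [Filter.eventually_ge_atTop (2*c), Filter.eventually_ge_atTop 1] with v hv hv1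
  have hv0 : (0:ℝ) < v := by linarith
  have hSS : SSf c v = Real.exp (Real.log v - FFf c v - Real.log c) := by
    rw [Real.exp_sub, Real.exp_sub, Real.exp_log hv0, Real.exp_log hc, SSf, Real.exp_neg]
    ring
  rw [hSS]
  apply Real.exp_le_exp.2
  have h4 := FF_le hc hv
  have hβ : 1 - 2 * c / (2 * c + 1) = 1/(2*c+1) := by
    field_simp
    ring
  have h2 : 2*c/(2*c+1)*(Real.log v - Real.log (2*c))
      = 2*c/(2*c+1)*Real.log v - 2*c/(2*c+1)*Real.log (2*c) := by ring
  have h3 : 1/(2*c+1) * Real.log v = Real.log v - 2*c/(2*c+1)*Real.log v := by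
    rw [← hβ]; ring
  linarith [h4, h2.le, h2.ge, h3.le, h3.ge]

lemma SS_surj (hc : 0 < c) {s : ℝ} (hs : 1 ≤ s) : ∃ u, c ≤ u ∧ SSf c u = s := by
  obtain ⟨v₀, hv₀c, hv₀⟩ : ∃ v₀, c ≤ v₀ ∧ s ≤ SSf c v₀ := by
    obtain ⟨v₀, h⟩ := ((SS_tendsto hc).eventually_ge_atTop s).and
      (Filter.eventually_ge_atTop c) |>.exists
    exact ⟨v₀, h.2, h.1⟩
  have hsub : Icc c v₀ ⊆ Ici c := Icc_subset_Ici_self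
  have := intermediate_value_Icc hv₀c ((SS_contOn hc).mono hsub)
  have hmem : s ∈ Icc (SSf c c) (SSf c v₀) := by
    rw [SS_self hc]; exact ⟨hs, hv₀⟩
  obtain ⟨w, hw, hws⟩ := this hmem
  exact ⟨w, hw.1, hws⟩


/-- The singular initial value problem (37):
`g' = −λ₁ g / √(s²λ_η² − λ₁² g²)`, `g(1) = λ_η/λ₁`, has a solution defined on
`[1,∞)`, which is positive, strictly decreasing, and satisfies
`g(s) < s λ_η/λ₁` for `s > 1`. -/
theorem singular_ivp_solution (lam1 lamEta : ℝ) (h1 : 0 < lam1) (hEta : 0 < lamEta) :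
    ∃ g : ℝ → ℝ,
      ContinuousOn g (Ici 1) ∧
      g 1 = lamEta / lam1 ∧
      (∀ s ∈ Ioi (1 : ℝ),
        HasDerivAt g (-(lam1 * g s) / Real.sqrt (s ^ 2 * lamEta ^ 2 - lam1 ^ 2 * g s ^ 2)) s) ∧
      (∀ s ∈ Ici (1 : ℝ), 0 < g s) ∧
      StrictAntiOn g (Ici 1) ∧
      (∀ s ∈ Ioi (1 : ℝ), g s < s * lamEta / lam1) := by
  set c : ℝ := lam1 / lamEta with hcdef
  have hc : 0 < c := div_pos h1 hEta
  have hcl : lam1 = c * lamEta := by rw [hcdef, div_mul_cancel₀ _ hEta.ne']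
  have exu : ∀ s : ℝ, 1 ≤ s → ∃ w, c ≤ w ∧ SSf c w = s := fun s hs => SS_surj hc hs
  choose! u hu1 hu2 using exu
  set g : ℝ → ℝ := fun x => Real.exp (-(FFf c (u x))) / c with hgdef
  -- u 1 = c
  have hu10 : u 1 = c := by
    by_contra hne
    have h1le : (1:ℝ) ≤ 1 := le_refl 1
    have : c < u 1 := lt_of_le_of_ne (hu1 1 h1le) (Ne.symm hne)
    have := SS_strictMono hc (le_refl c) (hu1 1 h1le) this
    rw [hu2 1 h1le, SS_self hc] at this
    exact lt_irrefl _ this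
  -- u s > c for s > 1
  have huc : ∀ s : ℝ, 1 < s → c < u s := by
    intro s hs
    rcases lt_or_eq_of_le (hu1 s hs.le) with h | h
    · exact h
    · exfalso
      have := hu2 s hs.le
      rw [← h, SS_self hc] at this
      linarith
  -- continuity of u within Ici 1
  have hucont : ∀ s : ℝ, 1 ≤ s → Filter.Tendsto u (nhdsWithin s (Ici 1)) (nhds (u s)) := by
    intro s hs
    rw [tendsto_order]
    constructor
    · intro b hb
      rcases lt_or_ge b c with hbc | hbc
      · filter_upwards [self_mem_nhdsWithin] with x hx
        exact lt_of_lt_of_le hbc (hu1 x hx)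
      · have hlt : SSf c b < s := by
          rw [← hu2 s hs]
          exact SS_strictMono hc hbc (hu1 s hs) hb
        filter_upwards [nhdsWithin_le_nhds (Ioi_mem_nhds hlt), self_mem_nhdsWithin]
          with x hx hx1
        by_contra hbx
        push_neg at hbx
        have := (SS_strictMono hc).monotoneOn (hu1 x hx1) hbc hbx
        rw [hu2 x hx1] at this
        exact absurd hx (not_lt.2 this)
    · intro b hb
      have hcb : c < b := lt_of_le_of_lt (hu1 s hs) hb
      have hgt : s < SSf c b := by
        rw [← hu2 s hs]
        exact SS_strictMono hc (hu1 s hs) hcb.le hb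
      filter_upwards [nhdsWithin_le_nhds (Iio_mem_nhds hgt), self_mem_nhdsWithin]
        with x hx hx1
      by_contra hbx
      push_neg at hbx
      have := (SS_strictMono hc).monotoneOn hcb.le (hu1 x hx1) hbx
      rw [hu2 x hx1] at this
      exact absurd hx (not_lt.2 this)
  -- positivity of g
  have hgpos : ∀ s ∈ Ici (1:ℝ), 0 < g s := by
    intro s _
    exact div_pos (Real.exp_pos _) hc
  -- the derivative
  have hder : ∀ s ∈ Ioi (1:ℝ),
      HasDerivAt g (-(lam1 * g s) / Real.sqrt (s ^ 2 * lamEta ^ 2 - lam1 ^ 2 * g s ^ 2)) s := by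
    intro s hs
    rw [mem_Ioi] at hs
    set w : ℝ := u s with hw
    have hwc : c < w := huc s hs
    have hw0 : 0 < w := hc.trans hwc
    have hucontAt : ContinuousAt u s := by
      have := hucont s hs.le
      rwa [nhdsWithin_eq_nhds.2 (Ici_mem_nhds hs)] at this
    have hSSder := SS_hasDerivAt hc hw0
    set E : ℝ := Real.exp (-(FFf c w)) with hE
    have hEpos : 0 < E := Real.exp_pos _
    set q : ℝ := Real.sqrt (w ^ 2 - c ^ 2) with hq
    have hqpos : 0 < q := Real.sqrt_pos.2 (by nlinarith)
    have hqsq : q ^ 2 = w ^ 2 - c ^ 2 := Real.sq_sqrt (by nlinarith)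
    have hdpos : 0 < c * w + q := denom_pos hc hw0
    have hkk : kkf c w = c / (c * w + q) := rfl
    have h1k : 1 - w * kkf c w = q / (c * w + q) := one_sub_mul_kk hc hw0
    have hDne : Real.exp (-(FFf c w)) * (1 - w * kkf c w) / c ≠ 0 := by
      rw [h1k]
      positivity
    have hev : ∀ᶠ x in nhds s, SSf c (u x) = x := by
      filter_upwards [Ici_mem_nhds hs] with x hx
      exact hu2 x hx
    have huder : HasDerivAt u (Real.exp (-(FFf c w)) * (1 - w * kkf c w) / c)⁻¹ s :=
      HasDerivAt.of_local_left_inverse hucontAt hSSder hDne hev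
    have hGout : HasDerivAt (fun y => Real.exp (-(FFf c y)) / c)
        (Real.exp (-(FFf c w)) * -(kkf c w) / c) w :=
      ((FF_hasDerivAt hc hw0).neg.exp).div_const c
    have hgder : HasDerivAt g
        ((Real.exp (-(FFf c w)) * -(kkf c w) / c) *
          (Real.exp (-(FFf c w)) * (1 - w * kkf c w) / c)⁻¹) s :=
      HasDerivAt.comp s hGout huder
    have hseq : s = w * E / c := by
      conv_lhs => rw [← hu2 s hs.le]
      rfl
    have hg_s : g s = E / c := rfl
    have hinner : s ^ 2 * lamEta ^ 2 - lam1 ^ 2 * g s ^ 2 = (E * lamEta / c) ^ 2 * q ^ 2 := by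
      rw [hg_s, hseq, hcl, hqsq]
      field_simp
    have hsqrt : Real.sqrt (s ^ 2 * lamEta ^ 2 - lam1 ^ 2 * g s ^ 2) = E * lamEta / c * q := by
      rw [hinner, Real.sqrt_mul (sq_nonneg _), Real.sqrt_sq (by positivity),
        Real.sqrt_sq hqpos.le]
    convert hgder using 1
    rw [hg_s, hsqrt, hkk, ← hE, hcl]
    have h1k' : 1 - w * (c / (c * w + q)) = q / (c * w + q) := by
      field_simp
      ring
    rw [h1k']
    have hR : E * -(c / (c * w + q)) / c * (E * (q / (c * w + q)) / c)⁻¹ = -c / q := by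
      rw [show E * (q / (c * w + q)) / c = E * q / (c * (c * w + q)) by field_simp]
      rw [show (E * q / (c * (c * w + q)))⁻¹ = c * (c * w + q) / (E * q) by
        rw [inv_div]]
      field_simp
    have hL : -(c * lamEta * (E / c)) / (E * lamEta / c * q) = -c / q := by
      field_simp
    rw [hR, hL]
  -- bound g s < s * lamEta / lam1
  have hlt : ∀ s ∈ Ioi (1:ℝ), g s < s * lamEta / lam1 := by
    intro s hs
    rw [mem_Ioi] at hs
    set w : ℝ := u s with hw
    set E : ℝ := Real.exp (-(FFf c w)) with hE
    have hwc : c < w := huc s hs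
    have hEpos : (0:ℝ) < E := Real.exp_pos _
    have hel : lamEta / lam1 = 1 / c := by rw [hcdef, one_div_div]
    have hseq : s = w * E / c := by
      conv_lhs => rw [← hu2 s hs.le]
      rfl
    have hrhs : s * lamEta / lam1 = w * E / c / c := by
      rw [mul_div_assoc, hel, hseq, mul_one_div]
    show E / c < s * lamEta / lam1
    rw [hrhs, div_lt_div_iff₀ hc hc, div_mul_cancel₀ _ hc.ne']
    nlinarith
  -- sqrt positivity helper
  have hsqrtpos : ∀ s ∈ Ioi (1:ℝ), 0 < s ^ 2 * lamEta ^ 2 - lam1 ^ 2 * g s ^ 2 := by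
    intro s hs
    have h0 := hgpos s (mem_Ici.2 (mem_Ioi.1 hs).le)
    have h2 := hlt s hs
    rw [mem_Ioi] at hs
    have hs0 : (0:ℝ) < s := by linarith
    have : lam1 * g s < s * lamEta := by
      rw [lt_div_iff₀ h1] at h2
      nlinarith
    have hA : 0 < s * lamEta - lam1 * g s := by linarith
    have hB : 0 < s * lamEta + lam1 * g s := by
      have := mul_pos h1 h0
      have := mul_pos hs0 hEta
      linarith
    nlinarith [mul_pos hA hB]
  -- continuity
  have hgcont : ContinuousOn g (Ici 1) := by
    intro s hs
    rw [mem_Ici] at hs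
    rcases eq_or_lt_of_le hs with h | h
    · subst h
      have houter : ContinuousAt (fun y => Real.exp (-(FFf c y)) / c) (u 1) := by
        rw [hu10]
        exact ContinuousAt.div_const
          (Real.continuous_exp.continuousAt.comp ((FF_hasDerivAt hc hc).continuousAt.neg)) c
      exact houter.comp_continuousWithinAt (hucont 1 le_rfl)
    · exact ((hder s h).continuousAt).continuousWithinAt
  -- strict antitonicity
  have hanti : StrictAntiOn g (Ici 1) := by
    apply strictAntiOn_of_deriv_neg (convex_Ici 1) hgcont
    intro x hx
    rw [interior_Ici] at hx
    rw [(hder x hx).deriv]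
    apply div_neg_of_neg_of_pos
    · have := hgpos x (mem_Ici.2 (mem_Ioi.1 hx).le)
      nlinarith
    · exact Real.sqrt_pos.2 (hsqrtpos x hx)
  refine ⟨g, hgcont, ?_, hder, hgpos, hanti, hlt⟩
  show Real.exp (-(FFf c (u 1))) / c = lamEta / lam1
  rw [hu10, FF_self, neg_zero, Real.exp_zero, hcdef, one_div_div]
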